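/- Let d ≥ 1, σ > 0, let f̂ : ℝᵈ → ℝ be twice differentiable with ‖∇f̂(x)‖ ≤ B and ‖∇²f̂(x)‖_op ≤ G for all x ∈ ℝᵈ, let x₀ ∈ ℝᵈ with ∇f̂(x₀) ≠ 0, and let w ∈ ℝᵈ be a nonzero vector. Define L(z) := ⟨∇f̂(x₀), (I − η_w)z⟩, R(z) := f̂(x₀ + (I − η_w)z) − f̂(x₀) − L(z), and ζ(z) := R(z) − E_{z' ∼ γ_σ}[R(z')]. Then E_{z ∼ γ_σ}[L(z)·ζ(z)] ≤ √(E[L(z)²]) · √(E[ζ(z)²]) ≤ σ·‖∇f̂(x₀)‖·sin θ(∇f̂(x₀), w) · √2 · G d σ². -/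

import Mathlib

open MeasureTheory ProbabilityTheory InnerProductGeometry
open scoped RealInnerProductSpace

/-- The isotropic Gaussian measure on `ℝᵈ`: the law of a random vector whose `d`
coordinates are i.i.d. `N(0, σ²)`. -/
noncomputable def gaussE (d : ℕ) (σ : ℝ) : Measure (EuclideanSpace ℝ (Fin d)) :=
  (Measure.pi fun _ : Fin d => gaussianReal 0 (Real.toNNReal (σ ^ 2))).map
    (MeasurableEquiv.toLp 2 (Fin d → ℝ))

/-- `(I − η_w) z`, where `η_w = w wᵀ / ‖w‖²` is the orthogonal projection onto `span {w}`:
the orthogonal projection of `z` onto the hyperplane orthogonal to `w`. -/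
noncomputable def projPerp {d : ℕ} (w z : EuclideanSpace ℝ (Fin d)) :
    EuclideanSpace ℝ (Fin d) :=
  z - ((⟪w, z⟫ : ℝ) / ‖w‖ ^ 2) • w

section Aux
open MeasureTheory Real


lemma intPow {b : ℝ} (hb : 0 < b) (n : ℕ) :
    Integrable (fun x : ℝ => x ^ n * Real.exp (-b * x ^ 2)) := by
  have h := integrable_rpow_mul_exp_neg_mul_sq hb (s := (n : ℝ))
    (lt_of_lt_of_le (by norm_num) (Nat.cast_nonneg n))
  have : ∀ x : ℝ, x ^ (n : ℝ) = x ^ n := fun x => Real.rpow_natCast x n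
  simpa only [this] using h

lemma deriv_int_zero {b : ℝ} (hb : 0 < b) (n : ℕ) :
    ∫ x : ℝ, ((n + 1 : ℕ) * x ^ n * Real.exp (-b * x ^ 2)
      + x ^ (n + 1) * ((-b * (2 * x)) * Real.exp (-b * x ^ 2))) = 0 := by
  apply integral_eq_zero_of_hasDerivAt_of_integrable
    (f := fun x : ℝ => x ^ (n + 1) * Real.exp (-b * x ^ 2))
  · intro x
    have he : HasDerivAt (fun x : ℝ => Real.exp (-b * x ^ 2))
        ((-b * (2 * x)) * Real.exp (-b * x ^ 2)) x := by
      have h := ((hasDerivAt_pow 2 x).const_mul (-b)).exp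
      convert h using 1
      ring
    have := (hasDerivAt_pow (n + 1) x).mul he
    simp only [Nat.add_sub_cancel] at this
    exact this
  · apply Integrable.add
    · exact ((intPow hb n).const_mul _).congr (by
        filter_upwards with x; ring)
    · have : Integrable (fun x : ℝ => (-2 * b) * (x ^ (n + 2) * Real.exp (-b * x ^ 2))) :=
        (intPow hb (n + 2)).const_mul _
      exact this.congr (by filter_upwards with x; ring)
  · exact intPow hb (n + 1)

lemma I1_eq {b : ℝ} (hb : 0 < b) : ∫ x : ℝ, x * Real.exp (-b * x ^ 2) = 0 := by
  have hderiv : ∀ x : ℝ, HasDerivAt (fun x : ℝ => Real.exp (-b * x ^ 2))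
      ((-2 * b) * (x * Real.exp (-b * x ^ 2))) x := by
    intro x
    have h := ((hasDerivAt_pow 2 x).const_mul (-b)).exp
    convert h using 1
    ring
  have h0 := integral_eq_zero_of_hasDerivAt_of_integrable hderiv
    (by
      have : Integrable (fun x : ℝ => (-2 * b) * (x ^ 1 * Real.exp (-b * x ^ 2))) :=
        (intPow hb 1).const_mul _
      exact this.congr (by filter_upwards with x; ring))
    (by simpa using intPow hb 0)
  rw [MeasureTheory.integral_const_mul] at h0
  rcases mul_eq_zero.1 h0 with h | h
  · exfalso; nlinarith
  · exact h

lemma I2_eq {b : ℝ} (hb : 0 < b) :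
    ∫ x : ℝ, x ^ 2 * Real.exp (-b * x ^ 2)
      = (2 * b)⁻¹ * ∫ x : ℝ, Real.exp (-b * x ^ 2) := by
  have h0 := deriv_int_zero hb 0
  have heq : (fun x : ℝ => ((0 + 1 : ℕ) * x ^ 0 * Real.exp (-b * x ^ 2)
      + x ^ (0 + 1) * ((-b * (2 * x)) * Real.exp (-b * x ^ 2))))
      = fun x : ℝ => Real.exp (-b * x ^ 2)
        + (-2 * b) * (x ^ 2 * Real.exp (-b * x ^ 2)) := by
    funext x; push_cast; ring
  rw [heq] at h0
  rw [integral_add (by simpa using intPow hb 0) ((intPow hb 2).const_mul _),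
    MeasureTheory.integral_const_mul] at h0
  have hb' : (2 : ℝ) * b ≠ 0 := by positivity
  have key : (2 * b) * ∫ x : ℝ, x ^ 2 * Real.exp (-b * x ^ 2)
      = ∫ x : ℝ, Real.exp (-b * x ^ 2) := by linarith
  have h2 : ∫ x : ℝ, x ^ 2 * Real.exp (-b * x ^ 2)
      = (2 * b)⁻¹ * ((2 * b) * ∫ x : ℝ, x ^ 2 * Real.exp (-b * x ^ 2)) := by
    rw [← mul_assoc, inv_mul_cancel₀ hb', one_mul]
  rw [h2, key]

lemma I4_eq {b : ℝ} (hb : 0 < b) :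
    ∫ x : ℝ, x ^ 4 * Real.exp (-b * x ^ 2)
      = 3 * (2 * b)⁻¹ * ∫ x : ℝ, x ^ 2 * Real.exp (-b * x ^ 2) := by
  have h0 := deriv_int_zero hb 2
  have heq : (fun x : ℝ => ((2 + 1 : ℕ) * x ^ 2 * Real.exp (-b * x ^ 2)
      + x ^ (2 + 1) * ((-b * (2 * x)) * Real.exp (-b * x ^ 2))))
      = fun x : ℝ => (3 : ℝ) * (x ^ 2 * Real.exp (-b * x ^ 2))
        + (-2 * b) * (x ^ 4 * Real.exp (-b * x ^ 2)) := by
    funext x; push_cast; ring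
  rw [heq] at h0
  rw [integral_add ((intPow hb 2).const_mul _) ((intPow hb 4).const_mul _),
    MeasureTheory.integral_const_mul, MeasureTheory.integral_const_mul] at h0
  have hb' : (2 : ℝ) * b ≠ 0 := by positivity
  have key : (2 * b) * ∫ x : ℝ, x ^ 4 * Real.exp (-b * x ^ 2)
      = 3 * ∫ x : ℝ, x ^ 2 * Real.exp (-b * x ^ 2) := by linarith
  have h2 : ∫ x : ℝ, x ^ 4 * Real.exp (-b * x ^ 2)
      = (2 * b)⁻¹ * ((2 * b) * ∫ x : ℝ, x ^ 4 * Real.exp (-b * x ^ 2)) := by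
    rw [← mul_assoc, inv_mul_cancel₀ hb', one_mul]
  rw [h2, key]; ring
open MeasureTheory Real ProbabilityTheory
open scoped NNReal ENNReal

-- transfer
lemma integral_gaussR (v : ℝ≥0) (hv : v ≠ 0) (f : ℝ → ℝ) :
    ∫ x, f x ∂(gaussianReal 0 v) = ∫ x, gaussianPDFReal 0 v x * f x := by
  rw [gaussianReal_of_var_ne_zero 0 hv]
  have h := integral_withDensity_eq_integral_smul (μ := (volume : Measure ℝ))
    (f := fun x => (gaussianPDFReal 0 v x).toNNReal)
    ((measurable_gaussianPDFReal 0 v).real_toNNReal) f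
  rw [show (gaussianPDF 0 v) = (fun x => ((gaussianPDFReal 0 v x).toNNReal : ENNReal)) from rfl]
  rw [h]
  congr 1
  funext x
  rw [NNReal.smul_def, Real.coe_toNNReal _ (gaussianPDFReal_nonneg 0 v x)]
  rfl

example : True := trivial

lemma integrable_gaussR (v : ℝ≥0) (hv : v ≠ 0) (f : ℝ → ℝ)
    (hf : Integrable (fun x => gaussianPDFReal 0 v x * f x)) :
    Integrable f (gaussianReal 0 v) := by
  rw [gaussianReal_of_var_ne_zero 0 hv]
  rw [show (gaussianPDF 0 v) = (fun x => ((gaussianPDFReal 0 v x).toNNReal : ENNReal)) from rfl]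
  rw [integrable_withDensity_iff_integrable_smul
    ((measurable_gaussianPDFReal 0 v).real_toNNReal)]
  apply hf.congr
  filter_upwards with x
  rw [NNReal.smul_def, Real.coe_toNNReal _ (gaussianPDFReal_nonneg 0 v x), smul_eq_mul]

lemma pdf_eq (v : ℝ≥0) (x : ℝ) :
    gaussianPDFReal 0 v x
      = (Real.sqrt (2 * π * v))⁻¹ * Real.exp (-(2 * (v : ℝ))⁻¹ * x ^ 2) := by
  unfold gaussianPDFReal
  congr 1
  rw [sub_zero]
  ring_nf

variable {v : ℝ≥0} (hv : v ≠ 0)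

private lemma hbv (hv : v ≠ 0) : 0 < (2 * (v : ℝ))⁻¹ := by
  have : 0 < (v : ℝ) := by exact_mod_cast pos_iff_ne_zero.2 hv
  positivity

lemma gauss_transfer (hv : v ≠ 0) (n : ℕ) :
    ∫ x, x ^ n ∂(gaussianReal 0 v)
      = (Real.sqrt (2 * π * v))⁻¹ * ∫ x : ℝ, x ^ n * Real.exp (-(2 * (v : ℝ))⁻¹ * x ^ 2) := by
  rw [integral_gaussR v hv, ← MeasureTheory.integral_const_mul]
  congr 1
  funext x
  rw [pdf_eq]
  ring

lemma gauss_cI0 (hv : v ≠ 0) :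
    (Real.sqrt (2 * π * v))⁻¹ * ∫ x : ℝ, Real.exp (-(2 * (v : ℝ))⁻¹ * x ^ 2) = 1 := by
  have h := integral_gaussianPDFReal_eq_one 0 hv
  rw [← MeasureTheory.integral_const_mul]
  rw [show (fun x : ℝ => (Real.sqrt (2 * π * v))⁻¹ * Real.exp (-(2 * (v : ℝ))⁻¹ * x ^ 2))
    = gaussianPDFReal 0 v from funext fun x => (pdf_eq v x).symm]
  exact h

lemma gauss_mean (hv : v ≠ 0) : ∫ x, x ∂(gaussianReal 0 v) = 0 := by
  have h := gauss_transfer hv 1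
  simp only [pow_one] at h
  rw [h, I1_eq (hbv hv), mul_zero]

lemma gauss_sq (hv : v ≠ 0) : ∫ x, x ^ 2 ∂(gaussianReal 0 v) = v := by
  have hvpos : 0 < (v : ℝ) := by exact_mod_cast pos_iff_ne_zero.2 hv
  rw [gauss_transfer hv 2, I2_eq (hbv hv), ← mul_assoc,
    mul_comm ((Real.sqrt (2 * π * v))⁻¹), mul_assoc, gauss_cI0 hv, mul_one]
  field_simp

lemma gauss_four (hv : v ≠ 0) : ∫ x, x ^ 4 ∂(gaussianReal 0 v) = 3 * (v : ℝ) ^ 2 := by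
  have hvpos : 0 < (v : ℝ) := by exact_mod_cast pos_iff_ne_zero.2 hv
  have h2 : (Real.sqrt (2 * π * v))⁻¹
      * ∫ x : ℝ, x ^ 2 * Real.exp (-(2 * (v : ℝ))⁻¹ * x ^ 2) = (v : ℝ) := by
    rw [← gauss_transfer hv 2]; exact gauss_sq hv
  rw [gauss_transfer hv 4, I4_eq (hbv hv), ← mul_assoc,
    mul_comm ((Real.sqrt (2 * π * v))⁻¹), mul_assoc, h2]
  have : (2 * (2 * (v : ℝ))⁻¹)⁻¹ = v := by field_simp
  rw [this]
  ring

lemma gauss_int_pow (hv : v ≠ 0) (n : ℕ) :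
    Integrable (fun x => x ^ n) (gaussianReal 0 v) := by
  apply integrable_gaussR v hv
  apply ((intPow (hbv hv) n).const_mul ((Real.sqrt (2 * π * v))⁻¹)).congr
  filter_upwards with x
  rw [pdf_eq]
  ring
open MeasureTheory Real ProbabilityTheory
open scoped NNReal ENNReal

section Pi
variable {ν : Measure ℝ} [IsProbabilityMeasure ν] {d : ℕ}

lemma pi_prod_formula (ν : Measure ℝ) [IsProbabilityMeasure ν] (F : Fin d → ℝ → ℝ) :
    ∫ x : Fin d → ℝ, ∏ k, F k (x k) ∂(Measure.pi fun _ => ν)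
      = ∏ k, ∫ t, F k t ∂ν := by
  letI : MeasureSpace ℝ := ⟨ν⟩
  haveI : SigmaFinite (volume : Measure ℝ) := by
    infer_instance
  exact MeasureTheory.integral_fintype_prod_eq_prod (𝕜 := ℝ) F

lemma pi_prod_integrable (ν : Measure ℝ) [IsProbabilityMeasure ν] (F : Fin d → ℝ → ℝ)
    (hF : ∀ k, Integrable (F k) ν) :
    Integrable (fun x : Fin d → ℝ => ∏ k, F k (x k)) (Measure.pi fun _ => ν) := by
  letI : MeasureSpace ℝ := ⟨ν⟩
  haveI : SigmaFinite (volume : Measure ℝ) := by infer_instance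
  exact MeasureTheory.Integrable.fintype_prod_dep hF

-- families
private lemma prod_fam_one {i : Fin d} (f : ℝ → ℝ) (x : Fin d → ℝ) :
    (∏ k, (if k = i then f else fun _ => (1:ℝ)) (x k)) = f (x i) := by
  rw [← Finset.mul_prod_erase Finset.univ _ (Finset.mem_univ i)]
  rw [Finset.prod_eq_one (fun k hk => by
    rw [if_neg (Finset.ne_of_mem_erase hk)]), mul_one, if_pos rfl]

private lemma prod_fam_two {i j : Fin d} (hij : i ≠ j) (f g : ℝ → ℝ) (x : Fin d → ℝ) :
    (∏ k, (if k = i then f else if k = j then g else fun _ => (1:ℝ)) (x k))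
      = f (x i) * g (x j) := by
  rw [← Finset.mul_prod_erase Finset.univ _ (Finset.mem_univ i),
    ← Finset.mul_prod_erase _ _ (Finset.mem_erase.2 ⟨hij.symm, Finset.mem_univ j⟩),
    Finset.prod_eq_one (fun k hk => by
      rw [if_neg (Finset.ne_of_mem_erase (Finset.mem_of_mem_erase hk)),
        if_neg (Finset.ne_of_mem_erase hk)]),
    mul_one, if_pos rfl, if_neg hij.symm, if_pos rfl]

lemma pi_integral_one (ν : Measure ℝ) [IsProbabilityMeasure ν] (i : Fin d) (f : ℝ → ℝ) :
    ∫ x : Fin d → ℝ, f (x i) ∂(Measure.pi fun _ => ν) = ∫ t, f t ∂ν := by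
  have h := pi_prod_formula ν (fun k => if k = i then f else fun _ => (1:ℝ))
  simp only [prod_fam_one] at h
  rw [h, ← Finset.mul_prod_erase Finset.univ _ (Finset.mem_univ i), if_pos rfl,
    Finset.prod_eq_one (fun k hk => by
      rw [if_neg (Finset.ne_of_mem_erase hk)]
      simp), mul_one]

lemma pi_integral_two (ν : Measure ℝ) [IsProbabilityMeasure ν] {i j : Fin d} (hij : i ≠ j)
    (f g : ℝ → ℝ) :
    ∫ x : Fin d → ℝ, f (x i) * g (x j) ∂(Measure.pi fun _ => ν)
      = (∫ t, f t ∂ν) * ∫ t, g t ∂ν := by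
  have h := pi_prod_formula ν (fun k => if k = i then f else if k = j then g else fun _ => (1:ℝ))
  simp only [prod_fam_two hij] at h
  rw [h, ← Finset.mul_prod_erase Finset.univ _ (Finset.mem_univ i),
    ← Finset.mul_prod_erase _ _ (Finset.mem_erase.2 ⟨hij.symm, Finset.mem_univ j⟩),
    Finset.prod_eq_one (fun k hk => by
      rw [if_neg (Finset.ne_of_mem_erase (Finset.mem_of_mem_erase hk)),
        if_neg (Finset.ne_of_mem_erase hk)]
      simp), mul_one, if_pos rfl, if_neg hij.symm, if_pos rfl]

lemma pi_integrable_one (ν : Measure ℝ) [IsProbabilityMeasure ν] (i : Fin d) (f : ℝ → ℝ)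
    (hf : Integrable f ν) :
    Integrable (fun x : Fin d → ℝ => f (x i)) (Measure.pi fun _ => ν) := by
  have h := pi_prod_integrable ν (fun k => if k = i then f else fun _ => (1:ℝ))
    (fun k => by
      by_cases hk : k = i
      · simpa [hk] using hf
      · simpa [hk] using integrable_const (μ := ν) (1:ℝ))
  apply h.congr
  filter_upwards with x
  exact prod_fam_one f x

lemma pi_integrable_two (ν : Measure ℝ) [IsProbabilityMeasure ν] {i j : Fin d} (hij : i ≠ j)
    (f g : ℝ → ℝ) (hf : Integrable f ν) (hg : Integrable g ν) :
    Integrable (fun x : Fin d → ℝ => f (x i) * g (x j)) (Measure.pi fun _ => ν) := by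
  have h := pi_prod_integrable ν
    (fun k => if k = i then f else if k = j then g else fun _ => (1:ℝ))
    (fun k => by
      by_cases hk : k = i
      · simpa [hk] using hf
      · by_cases hk' : k = j
        · simpa [hk, hk', Ne.symm hij] using hg
        · simpa [hk, hk'] using integrable_const (μ := ν) (1:ℝ))
  apply h.congr
  filter_upwards with x
  exact prod_fam_two hij f g x

end Pi
open MeasureTheory Real intervalIntegral

variable {E : Type*} [NormedAddCommGroup E] [InnerProductSpace ℝ E]

lemma taylor_bound {f : E → ℝ} (hf1 : Differentiable ℝ f)
    (hf2 : Differentiable ℝ (fderiv ℝ f)) {G : ℝ}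
    (hG : ∀ x, ‖fderiv ℝ (fderiv ℝ f) x‖ ≤ G) (x u : E) :
    |f (x + u) - f x - fderiv ℝ f x u| ≤ G / 2 * ‖u‖ ^ 2 := by
  have hlip : ∀ y z : E, ‖fderiv ℝ f y - fderiv ℝ f z‖ ≤ G * ‖y - z‖ := by
    intro y z
    exact Convex.norm_image_sub_le_of_norm_fderiv_le (fun a _ => (hf2 a)) (fun a _ => hG a)
      convex_univ trivial trivial
  -- the path
  have hline : ∀ t : ℝ, HasDerivAt (fun t : ℝ => x + t • u) u t := by
    intro t
    have h := ((hasDerivAt_id t).smul_const u).const_add x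
    simpa using h
  have hφ : ∀ t : ℝ, HasDerivAt (fun t : ℝ => f (x + t • u))
      (fderiv ℝ f (x + t • u) u) t := fun t =>
    (hf1 (x + t • u)).hasFDerivAt.comp_hasDerivAt t (hline t)
  have hcont : Continuous fun t : ℝ => fderiv ℝ f (x + t • u) u := by
    apply Continuous.clm_apply _ continuous_const
    exact hf2.continuous.comp (by continuity)
  have hftc : (∫ t in (0:ℝ)..1, fderiv ℝ f (x + t • u) u)
      = f (x + u) - f x := by
    have h := intervalIntegral.integral_eq_sub_of_hasDerivAt
      (f := fun t : ℝ => f (x + t • u)) (fun t _ => hφ t)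
      (hcont.intervalIntegrable 0 1)
    simpa using h
  have hsplit : f (x + u) - f x - fderiv ℝ f x u
      = ∫ t in (0:ℝ)..1, (fderiv ℝ f (x + t • u) u - fderiv ℝ f x u) := by
    rw [intervalIntegral.integral_sub (hcont.intervalIntegrable 0 1)
      (intervalIntegrable_const), hftc]
    simp
  rw [hsplit]
  have hbound : ∀ t ∈ Set.Ioc (0:ℝ) 1,
      ‖fderiv ℝ f (x + t • u) u - fderiv ℝ f x u‖ ≤ (G * ‖u‖ ^ 2) * t := by
    intro t ht
    have h1 : ‖fderiv ℝ f (x + t • u) u - fderiv ℝ f x u‖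
        ≤ ‖fderiv ℝ f (x + t • u) - fderiv ℝ f x‖ * ‖u‖ := by
      rw [← ContinuousLinearMap.sub_apply]
      exact ContinuousLinearMap.le_opNorm _ u
    have h2 : ‖fderiv ℝ f (x + t • u) - fderiv ℝ f x‖ ≤ G * (t * ‖u‖) := by
      have := hlip (x + t • u) x
      simpa [norm_smul, abs_of_pos ht.1] using this
    calc ‖fderiv ℝ f (x + t • u) u - fderiv ℝ f x u‖
        ≤ (G * (t * ‖u‖)) * ‖u‖ := h1.trans (by
          apply mul_le_mul_of_nonneg_right h2 (norm_nonneg u))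
      _ = (G * ‖u‖ ^ 2) * t := by ring
  have key : ‖∫ t in (0:ℝ)..1, (fderiv ℝ f (x + t • u) u - fderiv ℝ f x u)‖
      ≤ |∫ t in (0:ℝ)..1, (G * ‖u‖ ^ 2) * t| := by
    apply intervalIntegral.norm_integral_le_abs_of_norm_le
    · rw [Set.uIoc_of_le (by norm_num : (0:ℝ) ≤ 1)]
      exact (ae_restrict_iff' measurableSet_Ioc).2 (Filter.Eventually.of_forall hbound)
    · exact (continuous_const.mul continuous_id).intervalIntegrable 0 1
  have hval : (∫ t in (0:ℝ)..1, (G * ‖u‖ ^ 2) * t) = G / 2 * ‖u‖ ^ 2 := by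
    rw [intervalIntegral.integral_const_mul, integral_id]
    ring
  rw [Real.norm_eq_abs] at key
  refine le_trans key ?_
  have hG0 : 0 ≤ G := le_trans (norm_nonneg (fderiv ℝ (fderiv ℝ f) x)) (hG x)
  rw [hval, abs_of_nonneg (by positivity)]
open MeasureTheory Real InnerProductGeometry
open scoped RealInnerProductSpace


variable {d : ℕ}

lemma inner_gradient (f : EuclideanSpace ℝ (Fin d) → ℝ) (x y : EuclideanSpace ℝ (Fin d)) :
    (⟪gradient f x, y⟫ : ℝ) = fderiv ℝ f x y :=
  InnerProductSpace.toDual_symm_apply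

lemma projPerp_adj (w a z : EuclideanSpace ℝ (Fin d)) :
    (⟪a, projPerp w z⟫ : ℝ) = ⟪projPerp w a, z⟫ := by
  simp only [projPerp, inner_sub_left, inner_sub_right, real_inner_smul_left,
    real_inner_smul_right]
  rw [real_inner_comm w a]
  ring

lemma norm_projPerp_sq (w z : EuclideanSpace ℝ (Fin d)) (hw : w ≠ 0) :
    ‖projPerp w z‖ ^ 2 = ‖z‖ ^ 2 - (⟪w, z⟫ : ℝ) ^ 2 / ‖w‖ ^ 2 := by
  have hw' : ‖w‖ ≠ 0 := norm_ne_zero_iff.2 hw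
  have h := norm_sub_sq_real z (((⟪w, z⟫ : ℝ) / ‖w‖ ^ 2) • w)
  rw [show projPerp w z = z - ((⟪w, z⟫ : ℝ) / ‖w‖ ^ 2) • w from rfl, h,
    real_inner_smul_right, norm_smul, real_inner_comm]
  rw [Real.norm_eq_abs, mul_pow, sq_abs]
  field_simp
  ring

lemma norm_projPerp_le (w z : EuclideanSpace ℝ (Fin d)) (hw : w ≠ 0) :
    ‖projPerp w z‖ ≤ ‖z‖ := by
  have h := norm_projPerp_sq w z hw
  have h2 : ‖projPerp w z‖ ^ 2 ≤ ‖z‖ ^ 2 := by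
    rw [h]
    have : 0 ≤ (⟪w, z⟫ : ℝ) ^ 2 / ‖w‖ ^ 2 := by positivity
    linarith
  nlinarith [norm_nonneg (projPerp w z), norm_nonneg z]

lemma norm_projPerp_eq (g w : EuclideanSpace ℝ (Fin d)) (hw : w ≠ 0) :
    ‖projPerp w g‖ = ‖g‖ * Real.sin (InnerProductGeometry.angle g w) := by
  have hw' : ‖w‖ ≠ 0 := norm_ne_zero_iff.2 hw
  by_cases hg : g = 0
  · simp [hg, projPerp]
  have hg' : ‖g‖ ≠ 0 := norm_ne_zero_iff.2 hg
  rw [InnerProductGeometry.angle, Real.sin_arccos]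
  rw [show ‖projPerp w g‖ = Real.sqrt (‖projPerp w g‖ ^ 2) from
    (Real.sqrt_sq (norm_nonneg _)).symm, norm_projPerp_sq w g hw]
  rw [show ‖g‖ = Real.sqrt (‖g‖ ^ 2) from (Real.sqrt_sq (norm_nonneg _)).symm]
  rw [← Real.sqrt_mul (by positivity)]
  congr 1
  rw [Real.sq_sqrt (by positivity)]
  rw [real_inner_comm w g]
  field_simp
  rw [Real.sq_sqrt (sq_nonneg _)]
  ring


lemma esymm_apply (x : Fin d → ℝ) (i : Fin d) :
    (MeasurableEquiv.toLp 2 (Fin d → ℝ)) x i = x i := rfl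

lemma inner_esymm (a : EuclideanSpace ℝ (Fin d)) (x : Fin d → ℝ) :
    (⟪a, (MeasurableEquiv.toLp 2 (Fin d → ℝ)) x⟫ : ℝ) = ∑ i, a i * x i := by
  rw [PiLp.inner_apply]
  simp [esymm_apply, mul_comm]

lemma norm_esymm_sq (x : Fin d → ℝ) :
    ‖(MeasurableEquiv.toLp 2 (Fin d → ℝ)) x‖ ^ 2 = ∑ i, (x i) ^ 2 := by
  rw [EuclideanSpace.norm_eq, Real.sq_sqrt (by positivity)]
  simp [esymm_apply]

open ProbabilityTheory in
lemma gaussE_integral (σ : ℝ) (h : EuclideanSpace ℝ (Fin d) → ℝ) :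
    ∫ z, h z ∂(gaussE d σ)
      = ∫ x, h ((MeasurableEquiv.toLp 2 (Fin d → ℝ)) x)
          ∂(Measure.pi fun _ : Fin d => gaussianReal 0 (Real.toNNReal (σ ^ 2))) := by
  rw [gaussE, MeasureTheory.integral_map_equiv]

open ProbabilityTheory in
lemma gaussE_integrable_iff (σ : ℝ) (h : EuclideanSpace ℝ (Fin d) → ℝ) :
    Integrable h (gaussE d σ)
      ↔ Integrable (fun x => h ((MeasurableEquiv.toLp 2 (Fin d → ℝ)) x))
          (Measure.pi fun _ : Fin d => gaussianReal 0 (Real.toNNReal (σ ^ 2))) := by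
  rw [gaussE, MeasureTheory.integrable_map_equiv]
  rfl
open MeasureTheory Real ProbabilityTheory
open scoped NNReal ENNReal

section moments
variable {d : ℕ} {v : ℝ≥0} (hv : v ≠ 0)

-- dummy placeholders so this file can reference earlier lemmas when concatenated
-- (removed in final file)

lemma gauss_int_id (hv : v ≠ 0) : Integrable (fun x : ℝ => x) (gaussianReal 0 v) := by
  simpa using gauss_int_pow hv 1

lemma pi_integrable_xx (hv : v ≠ 0) (i j : Fin d) :
    Integrable (fun x : Fin d → ℝ => x i * x j) (Measure.pi fun _ => gaussianReal 0 v) := by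
  by_cases hij : i = j
  · subst hij
    exact pi_integrable_one _ i (fun t => t * t)
      (((gauss_int_pow hv 2)).congr (by filter_upwards with t; rw [sq]))
  · exact pi_integrable_two _ hij _ _ (gauss_int_id hv) (gauss_int_id hv)

lemma pi_integral_xx (hv : v ≠ 0) (i j : Fin d) :
    ∫ x : Fin d → ℝ, x i * x j ∂(Measure.pi fun _ => gaussianReal 0 v)
      = if i = j then (v : ℝ) else 0 := by
  by_cases hij : i = j
  · subst hij
    rw [if_pos rfl]
    have h := pi_integral_one (d := d) (gaussianReal 0 v) i (fun t => t * t)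
    rw [h]
    rw [show (fun t : ℝ => t * t) = fun t : ℝ => t ^ 2 from funext fun t => (sq t).symm]
    exact gauss_sq hv
  · rw [if_neg hij]
    have h := pi_integral_two (d := d) (gaussianReal 0 v) hij (fun t => t) (fun t => t)
    beta_reduce at h
    rw [h, gauss_mean hv, mul_zero]

lemma pi_integrable_x2x2 (hv : v ≠ 0) (i j : Fin d) :
    Integrable (fun x : Fin d → ℝ => (x i) ^ 2 * (x j) ^ 2)
      (Measure.pi fun _ => gaussianReal 0 v) := by
  by_cases hij : i = j
  · subst hij
    exact pi_integrable_one _ i (fun t => t ^ 2 * t ^ 2)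
      (((gauss_int_pow hv 4)).congr (by filter_upwards with t; ring))
  · exact pi_integrable_two _ hij _ _ (gauss_int_pow hv 2) (gauss_int_pow hv 2)

lemma pi_integral_x2x2_le (hv : v ≠ 0) (i j : Fin d) :
    ∫ x : Fin d → ℝ, (x i) ^ 2 * (x j) ^ 2 ∂(Measure.pi fun _ => gaussianReal 0 v)
      ≤ 3 * (v : ℝ) ^ 2 := by
  by_cases hij : i = j
  · subst hij
    have h := pi_integral_one (d := d) (gaussianReal 0 v) i (fun t => t ^ 2 * t ^ 2)
    rw [h, show (fun t : ℝ => t ^ 2 * t ^ 2) = fun t : ℝ => t ^ 4 from funext fun t => by ring]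
    rw [gauss_four hv]
  · have h := pi_integral_two (d := d) (gaussianReal 0 v) hij (fun t => t ^ 2) (fun t => t ^ 2)
    beta_reduce at h
    rw [h, gauss_sq hv]
    nlinarith [NNReal.coe_nonneg v]

lemma pi_int_linsq (hv : v ≠ 0) (a : Fin d → ℝ) :
    ∫ x : Fin d → ℝ, (∑ i, a i * x i) ^ 2 ∂(Measure.pi fun _ => gaussianReal 0 v)
      = (v : ℝ) * ∑ i, (a i) ^ 2 := by
  have hexp : ∀ x : Fin d → ℝ, (∑ i, a i * x i) ^ 2
      = ∑ i, ∑ j, (a i * a j) * (x i * x j) := by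
    intro x
    rw [sq, Finset.sum_mul_sum]
    congr 1; funext i; congr 1; funext j; ring
  simp only [hexp]
  rw [integral_finset_sum _ (fun i _ => integrable_finset_sum _
    (fun j _ => (pi_integrable_xx hv i j).const_mul _))]
  have : ∀ i, ∫ x : Fin d → ℝ, (∑ j, (a i * a j) * (x i * x j))
      ∂(Measure.pi fun _ => gaussianReal 0 v) = (v : ℝ) * (a i) ^ 2 := by
    intro i
    rw [integral_finset_sum _ (fun j _ => (pi_integrable_xx hv i j).const_mul _)]
    have : ∀ j, ∫ x : Fin d → ℝ, (a i * a j) * (x i * x j)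
        ∂(Measure.pi fun _ => gaussianReal 0 v)
        = if i = j then (v : ℝ) * (a i) ^ 2 else 0 := by
      intro j
      rw [MeasureTheory.integral_const_mul, pi_integral_xx hv i j]
      by_cases hij : i = j
      · subst hij; rw [if_pos rfl, if_pos rfl]; ring
      · rw [if_neg hij, if_neg hij, mul_zero]
    simp only [this]
    simp
  simp only [this]
  rw [← Finset.mul_sum]

lemma pi_integrable_linsq (hv : v ≠ 0) (a : Fin d → ℝ) :
    Integrable (fun x : Fin d → ℝ => (∑ i, a i * x i) ^ 2)
      (Measure.pi fun _ => gaussianReal 0 v) := by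
  have hexp : ∀ x : Fin d → ℝ, (∑ i, a i * x i) ^ 2
      = ∑ i, ∑ j, (a i * a j) * (x i * x j) := by
    intro x
    rw [sq, Finset.sum_mul_sum]
    congr 1; funext i; congr 1; funext j; ring
  simp only [hexp]
  exact integrable_finset_sum _ (fun i _ => integrable_finset_sum _
    (fun j _ => (pi_integrable_xx hv i j).const_mul _))

lemma pi_integrable_sumsq (hv : v ≠ 0) :
    Integrable (fun x : Fin d → ℝ => ∑ i, (x i) ^ 2)
      (Measure.pi fun _ => gaussianReal 0 v) :=
  integrable_finset_sum _ (fun i _ => pi_integrable_one _ i _ (gauss_int_pow hv 2))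

lemma pi_integrable_sumsq_sq (hv : v ≠ 0) :
    Integrable (fun x : Fin d → ℝ => (∑ i, (x i) ^ 2) ^ 2)
      (Measure.pi fun _ => gaussianReal 0 v) := by
  have hexp : ∀ x : Fin d → ℝ, (∑ i, (x i) ^ 2) ^ 2
      = ∑ i, ∑ j, (x i) ^ 2 * (x j) ^ 2 := by
    intro x
    rw [sq, Finset.sum_mul_sum]
  simp only [hexp]
  exact integrable_finset_sum _ (fun i _ => integrable_finset_sum _
    (fun j _ => pi_integrable_x2x2 hv i j))

lemma pi_int_sumsq_sq_le (hv : v ≠ 0) :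
    ∫ x : Fin d → ℝ, (∑ i, (x i) ^ 2) ^ 2 ∂(Measure.pi fun _ => gaussianReal 0 v)
      ≤ 3 * (d : ℝ) ^ 2 * (v : ℝ) ^ 2 := by
  have hexp : ∀ x : Fin d → ℝ, (∑ i, (x i) ^ 2) ^ 2
      = ∑ i, ∑ j, (x i) ^ 2 * (x j) ^ 2 := by
    intro x
    rw [sq, Finset.sum_mul_sum]
  simp only [hexp]
  rw [integral_finset_sum _ (fun i _ => integrable_finset_sum _
    (fun j _ => pi_integrable_x2x2 hv i j))]
  have h1 : ∀ i : Fin d, ∫ x : Fin d → ℝ, (∑ j, (x i) ^ 2 * (x j) ^ 2)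
      ∂(Measure.pi fun _ => gaussianReal 0 v) ≤ (d : ℝ) * (3 * (v : ℝ) ^ 2) := by
    intro i
    rw [integral_finset_sum _ (fun j _ => pi_integrable_x2x2 hv i j)]
    calc ∑ j, ∫ x : Fin d → ℝ, (x i) ^ 2 * (x j) ^ 2 ∂(Measure.pi fun _ => gaussianReal 0 v)
        ≤ ∑ _j : Fin d, 3 * (v : ℝ) ^ 2 :=
          Finset.sum_le_sum (fun j _ => pi_integral_x2x2_le hv i j)
      _ = (d : ℝ) * (3 * (v : ℝ) ^ 2) := by
          rw [Finset.sum_const, Finset.card_univ, Fintype.card_fin, nsmul_eq_mul]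
  calc ∑ i, ∫ x : Fin d → ℝ, (∑ j, (x i) ^ 2 * (x j) ^ 2)
      ∂(Measure.pi fun _ => gaussianReal 0 v)
      ≤ ∑ _i : Fin d, (d : ℝ) * (3 * (v : ℝ) ^ 2) := Finset.sum_le_sum (fun i _ => h1 i)
    _ = 3 * (d : ℝ) ^ 2 * (v : ℝ) ^ 2 := by
        rw [Finset.sum_const, Finset.card_univ, Fintype.card_fin, nsmul_eq_mul]
        ring

end moments

end Aux

section Main
open MeasureTheory ProbabilityTheory InnerProductGeometry
open scoped RealInnerProductSpace NNReal

theorem stmt8 (d : ℕ) (hd : 1 ≤ d) (σ B G : ℝ) (hσ : 0 < σ)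
    (f : EuclideanSpace ℝ (Fin d) → ℝ)
    (hf1 : Differentiable ℝ f) (hf2 : Differentiable ℝ (fderiv ℝ f))
    (hB : ∀ x, ‖gradient f x‖ ≤ B)
    (hG : ∀ x, ‖fderiv ℝ (fderiv ℝ f) x‖ ≤ G)
    (x₀ : EuclideanSpace ℝ (Fin d)) (hx₀ : gradient f x₀ ≠ 0)
    (w : EuclideanSpace ℝ (Fin d)) (hw : w ≠ 0)
    (L R ζ : EuclideanSpace ℝ (Fin d) → ℝ)
    (hL : ∀ z, L z = (⟪gradient f x₀, projPerp w z⟫ : ℝ))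
    (hR : ∀ z, R z = f (x₀ + projPerp w z) - f x₀ - L z)
    (hζ : ∀ z, ζ z = R z - ∫ z', R z' ∂(gaussE d σ)) :
    (∫ z, L z * ζ z ∂(gaussE d σ))
      ≤ Real.sqrt (∫ z, (L z) ^ 2 ∂(gaussE d σ)) *
          Real.sqrt (∫ z, (ζ z) ^ 2 ∂(gaussE d σ)) ∧
    Real.sqrt (∫ z, (L z) ^ 2 ∂(gaussE d σ)) *
        Real.sqrt (∫ z, (ζ z) ^ 2 ∂(gaussE d σ))
      ≤ σ * ‖gradient f x₀‖ * Real.sin (angle (gradient f x₀) w) *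
          (Real.sqrt 2 * G * d * σ ^ 2) := by
  classical
  have hσ2 : (0:ℝ) < σ ^ 2 := by positivity
  have hv : Real.toNNReal (σ ^ 2) ≠ 0 := by
    simp only [ne_eq, Real.toNNReal_eq_zero, not_le]
    exact hσ2
  have hvσ : ((Real.toNNReal (σ ^ 2)) : ℝ) = σ ^ 2 := Real.coe_toNNReal _ hσ2.le
  have hG0 : (0:ℝ) ≤ G := le_trans (norm_nonneg (fderiv ℝ (fderiv ℝ f) x₀)) (hG x₀)
  set g : EuclideanSpace ℝ (Fin d) := gradient f x₀ with hgdef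
  set a : EuclideanSpace ℝ (Fin d) := projPerp w g with hadef
  haveI : IsProbabilityMeasure (gaussE d σ) := by
    rw [gaussE]
    exact Measure.isProbabilityMeasure_map
      ((MeasurableEquiv.toLp 2 (Fin d → ℝ)).measurable.aemeasurable)
  -- L as a fixed linear form
  have hLa : ∀ z, L z = (⟪a, z⟫ : ℝ) := fun z => by rw [hL z, projPerp_adj]
  have hLcont : Continuous L := by
    have : L = fun z => (⟪a, z⟫ : ℝ) := funext hLa
    rw [this]
    exact Continuous.inner continuous_const continuous_id
  -- second moment of L
  have hELker : (fun x : Fin d → ℝ =>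
        L ((MeasurableEquiv.toLp 2 (Fin d → ℝ)) x) ^ 2)
      = fun x => (∑ i, a i * x i) ^ 2 := by
    funext x
    rw [hLa, inner_esymm]
  have hEL2 : ∫ z, L z ^ 2 ∂(gaussE d σ)
      = ((Real.toNNReal (σ ^ 2)) : ℝ) * ∑ i, (a i) ^ 2 := by
    rw [gaussE_integral σ (fun z => L z ^ 2)]
    rw [show (fun x : Fin d → ℝ =>
        L ((MeasurableEquiv.toLp 2 (Fin d → ℝ)) x) ^ 2)
      = fun x => (∑ i, a i * x i) ^ 2 from hELker]
    exact pi_int_linsq hv (fun i => a i)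
  have hNa : ∑ i, (a i) ^ 2 = ‖a‖ ^ 2 := by
    rw [EuclideanSpace.norm_eq, Real.sq_sqrt (by positivity)]
    simp [sq_abs]
  have hIntL2 : Integrable (fun z => L z ^ 2) (gaussE d σ) := by
    rw [gaussE_integrable_iff σ (fun z => L z ^ 2)]
    rw [show (fun x : Fin d → ℝ =>
        L ((MeasurableEquiv.toLp 2 (Fin d → ℝ)) x) ^ 2)
      = fun x => (∑ i, a i * x i) ^ 2 from hELker]
    exact pi_integrable_linsq hv (fun i => a i)
  -- pointwise bound on R
  have hRb : ∀ z, |R z| ≤ G / 2 * ‖z‖ ^ 2 := by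
    intro z
    have ht := taylor_bound hf1 hf2 hG x₀ (projPerp w z)
    have hRz : R z = f (x₀ + projPerp w z) - f x₀ - fderiv ℝ f x₀ (projPerp w z) := by
      rw [hR z, hL z, inner_gradient]
    rw [hRz]
    refine le_trans ht ?_
    have h1 : ‖projPerp w z‖ ^ 2 ≤ ‖z‖ ^ 2 :=
      pow_le_pow_left₀ (norm_nonneg _) (norm_projPerp_le w z hw) 2
    have h2 : (0:ℝ) ≤ G / 2 := by positivity
    exact mul_le_mul_of_nonneg_left h1 h2
  have hPcont : Continuous fun z : EuclideanSpace ℝ (Fin d) => projPerp w z := by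
    simp only [projPerp]
    exact continuous_id.sub
      (by fun_prop)
  have hRcont : Continuous R := by
    have : R = fun z => f (x₀ + projPerp w z) - f x₀ - L z := funext hR
    rw [this]
    exact ((hf1.continuous.comp (continuous_const.add hPcont)).sub continuous_const).sub hLcont
  have hRm : AEStronglyMeasurable
      (fun x : Fin d → ℝ => R ((MeasurableEquiv.toLp 2 (Fin d → ℝ)) x))
      (Measure.pi fun _ : Fin d => gaussianReal 0 (Real.toNNReal (σ ^ 2))) :=
    (hRcont.measurable.comp
      (MeasurableEquiv.toLp 2 (Fin d → ℝ)).measurable).aestronglyMeasurable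
  have hRbound : ∀ x : Fin d → ℝ,
      ‖R ((MeasurableEquiv.toLp 2 (Fin d → ℝ)) x)‖
        ≤ ‖G / 2 * ∑ i, (x i) ^ 2‖ := by
    intro x
    rw [Real.norm_eq_abs, Real.norm_eq_abs]
    refine le_trans (hRb _) (le_trans ?_ (le_abs_self _))
    rw [norm_esymm_sq]
  have hIntR' : Integrable
      (fun x : Fin d → ℝ => R ((MeasurableEquiv.toLp 2 (Fin d → ℝ)) x))
      (Measure.pi fun _ : Fin d => gaussianReal 0 (Real.toNNReal (σ ^ 2))) :=
    Integrable.mono ((pi_integrable_sumsq hv).const_mul (G / 2)) hRm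
      (Filter.Eventually.of_forall hRbound)
  have hIntR : Integrable R (gaussE d σ) := by
    rw [gaussE_integrable_iff σ R]; exact hIntR'
  have hR2bound : ∀ x : Fin d → ℝ,
      ‖R ((MeasurableEquiv.toLp 2 (Fin d → ℝ)) x) ^ 2‖
        ≤ ‖(G / 2) ^ 2 * (∑ i, (x i) ^ 2) ^ 2‖ := by
    intro x
    rw [Real.norm_eq_abs, Real.norm_eq_abs, abs_pow]
    have h1 : |R ((MeasurableEquiv.toLp 2 (Fin d → ℝ)) x)|
        ≤ G / 2 * ∑ i, (x i) ^ 2 := by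
      refine le_trans (hRb _) ?_
      rw [norm_esymm_sq]
    refine le_trans (pow_le_pow_left₀ (abs_nonneg _) h1 2) (le_trans ?_ (le_abs_self _))
    rw [mul_pow]
  have hIntR2' : Integrable
      (fun x : Fin d → ℝ => R ((MeasurableEquiv.toLp 2 (Fin d → ℝ)) x) ^ 2)
      (Measure.pi fun _ : Fin d => gaussianReal 0 (Real.toNNReal (σ ^ 2))) :=
    Integrable.mono ((pi_integrable_sumsq_sq hv).const_mul ((G / 2) ^ 2))
      ((hRcont.pow 2).measurable.comp
        (MeasurableEquiv.toLp 2 (Fin d → ℝ)).measurable).aestronglyMeasurable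
      (Filter.Eventually.of_forall hR2bound)
  have hIntR2 : Integrable (fun z => R z ^ 2) (gaussE d σ) := by
    rw [gaussE_integrable_iff σ (fun z => R z ^ 2)]; exact hIntR2'
  -- second moment bound for R
  have hER2 : ∫ z, R z ^ 2 ∂(gaussE d σ)
      ≤ (G / 2) ^ 2 * (3 * (d : ℝ) ^ 2 * ((Real.toNNReal (σ ^ 2)) : ℝ) ^ 2) := by
    rw [gaussE_integral σ (fun z => R z ^ 2)]
    have step1 : ∫ x : Fin d → ℝ,
          R ((MeasurableEquiv.toLp 2 (Fin d → ℝ)) x) ^ 2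
          ∂(Measure.pi fun _ : Fin d => gaussianReal 0 (Real.toNNReal (σ ^ 2)))
        ≤ ∫ x : Fin d → ℝ, (G / 2) ^ 2 * (∑ i, (x i) ^ 2) ^ 2
          ∂(Measure.pi fun _ : Fin d => gaussianReal 0 (Real.toNNReal (σ ^ 2))) := by
      refine integral_mono hIntR2' ((pi_integrable_sumsq_sq hv).const_mul _) ?_
      intro x
      have h := hR2bound x
      rw [Real.norm_eq_abs, Real.norm_eq_abs] at h
      refine le_trans (le_abs_self _) (le_trans h ?_)
      rw [abs_of_nonneg (by positivity)]
    refine le_trans step1 ?_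
    rw [MeasureTheory.integral_const_mul]
    exact mul_le_mul_of_nonneg_left (pi_int_sumsq_sq_le hv) (by positivity)
  -- variance of R bounded by second moment
  have hEz2le : ∫ z, ζ z ^ 2 ∂(gaussE d σ) ≤ ∫ z, R z ^ 2 ∂(gaussE d σ) := by
    set c : ℝ := ∫ z', R z' ∂(gaussE d σ) with hcdef
    have hexp : (fun z => ζ z ^ 2)
        = fun z => R z ^ 2 - (2 * c) * R z + c ^ 2 := by
      funext z; rw [hζ z]; ring
    have hA : Integrable (fun z => R z ^ 2 - (2 * c) * R z) (gaussE d σ) :=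
      hIntR2.sub (hIntR.const_mul (2 * c))
    have hB' : Integrable (fun z => (2 * c) * R z) (gaussE d σ) := hIntR.const_mul (2 * c)
    rw [hexp, integral_add hA (integrable_const _),
      integral_sub hIntR2 hB', MeasureTheory.integral_const_mul,
      integral_const]
    simp only [probReal_univ, ENNReal.toReal_one, smul_eq_mul, one_mul]
    nlinarith [sq_nonneg c]
  have hIntz2 : Integrable (fun z => ζ z ^ 2) (gaussE d σ) := by
    have hexp : (fun z => ζ z ^ 2)
        = fun z => R z ^ 2 - (2 * (∫ z', R z' ∂(gaussE d σ))) * R z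
            + (∫ z', R z' ∂(gaussE d σ)) ^ 2 := by
      funext z; rw [hζ z]; ring
    rw [hexp]
    have hA : Integrable (fun z => R z ^ 2
        - (2 * (∫ z', R z' ∂(gaussE d σ))) * R z) (gaussE d σ) :=
      hIntR2.sub (hIntR.const_mul _)
    exact hA.add (integrable_const _)
  have hζcont : Continuous ζ := by
    have : ζ = fun z => R z - ∫ z', R z' ∂(gaussE d σ) := funext hζ
    rw [this]
    exact hRcont.sub continuous_const
  -- Cauchy–Schwarz
  have hpq : Real.HolderConjugate 2 2 := Real.HolderConjugate.two_two
  have hMemL : MemLp L (ENNReal.ofReal 2) (gaussE d σ) := by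
    rw [show ENNReal.ofReal 2 = 2 from by simp]
    exact (memLp_two_iff_integrable_sq hLcont.aestronglyMeasurable).2 hIntL2
  have hMemz : MemLp ζ (ENNReal.ofReal 2) (gaussE d σ) := by
    rw [show ENNReal.ofReal 2 = 2 from by simp]
    exact (memLp_two_iff_integrable_sq hζcont.aestronglyMeasurable).2 hIntz2
  have hCS := integral_mul_norm_le_Lp_mul_Lq hpq hMemL hMemz
  have hnorm2 : ∀ u : EuclideanSpace ℝ (Fin d) → ℝ,
      (∫ z, ‖u z‖ ^ (2:ℝ) ∂(gaussE d σ)) ^ ((1:ℝ)/2)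
        = Real.sqrt (∫ z, u z ^ 2 ∂(gaussE d σ)) := by
    intro u
    rw [Real.sqrt_eq_rpow]
    congr 1
    congr 1
    funext z
    rw [Real.norm_eq_abs, show (2:ℝ) = ((2:ℕ):ℝ) from by norm_num,
      Real.rpow_natCast, sq_abs]
  have first : (∫ z, L z * ζ z ∂(gaussE d σ))
      ≤ Real.sqrt (∫ z, (L z) ^ 2 ∂(gaussE d σ)) *
          Real.sqrt (∫ z, (ζ z) ^ 2 ∂(gaussE d σ)) := by
    calc (∫ z, L z * ζ z ∂(gaussE d σ))
        ≤ ‖∫ z, L z * ζ z ∂(gaussE d σ)‖ := le_abs_self _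
      _ ≤ ∫ z, ‖L z * ζ z‖ ∂(gaussE d σ) := norm_integral_le_integral_norm _
      _ = ∫ z, ‖L z‖ * ‖ζ z‖ ∂(gaussE d σ) := by
          congr 1; funext z; rw [norm_mul]
      _ ≤ (∫ z, ‖L z‖ ^ (2:ℝ) ∂(gaussE d σ)) ^ ((1:ℝ)/2) *
            (∫ z, ‖ζ z‖ ^ (2:ℝ) ∂(gaussE d σ)) ^ ((1:ℝ)/2) := hCS
      _ = Real.sqrt (∫ z, (L z) ^ 2 ∂(gaussE d σ)) *
            Real.sqrt (∫ z, (ζ z) ^ 2 ∂(gaussE d σ)) := by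
          rw [hnorm2 L, hnorm2 ζ]
  refine ⟨first, ?_⟩
  -- second inequality
  have h1 : Real.sqrt (∫ z, (L z) ^ 2 ∂(gaussE d σ)) = σ * ‖a‖ := by
    rw [hEL2, hNa, hvσ, show σ ^ 2 * ‖a‖ ^ 2 = (σ * ‖a‖) ^ 2 from by ring,
      Real.sqrt_sq (by positivity)]
  have h2 : ‖a‖ = ‖g‖ * Real.sin (angle g w) := norm_projPerp_eq g w hw
  have h3 : Real.sqrt (∫ z, (ζ z) ^ 2 ∂(gaussE d σ)) ≤ Real.sqrt 2 * G * d * σ ^ 2 := by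
    have hb : ∫ z, (ζ z) ^ 2 ∂(gaussE d σ) ≤ (Real.sqrt 2 * G * d * σ ^ 2) ^ 2 := by
      refine le_trans hEz2le (le_trans hER2 ?_)
      have hs2 : (Real.sqrt 2) ^ 2 = 2 := Real.sq_sqrt (by norm_num)
      rw [hvσ]
      nlinarith [sq_nonneg (G * (d : ℝ) * σ ^ 2), hG0, sq_nonneg ((d:ℝ) * σ ^ 2)]
    refine le_trans (Real.sqrt_le_sqrt hb) ?_
    rw [Real.sqrt_sq (by positivity)]
  have hnn : (0:ℝ) ≤ σ * ‖g‖ * Real.sin (angle g w) :=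
    mul_nonneg (mul_nonneg hσ.le (norm_nonneg _))
      (Real.sin_nonneg_of_nonneg_of_le_pi (angle_nonneg g w) (angle_le_pi g w))
  calc Real.sqrt (∫ z, (L z) ^ 2 ∂(gaussE d σ)) *
        Real.sqrt (∫ z, (ζ z) ^ 2 ∂(gaussE d σ))
      = (σ * ‖g‖ * Real.sin (angle g w)) *
          Real.sqrt (∫ z, (ζ z) ^ 2 ∂(gaussE d σ)) := by rw [h1, h2]; ring
    _ ≤ (σ * ‖g‖ * Real.sin (angle g w)) * (Real.sqrt 2 * G * d * σ ^ 2) :=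
        mul_le_mul_of_nonneg_left h3 hnn
end Main
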